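/- Let g be a nondegenerate symmetric 4×4 matrix with inverse g^{αβ}, and let F_{αβ;μ,ν} be real numbers symmetric under α↔β and under μ↔ν. Then Σ_{λ≤σ} F_{λσ;μ,ν} U^{λσ,μν,αβ} = 0 for all α≤β (summing over μ,ν) if and only if g^{λσ}(F_{ητ;λ,σ} + F_{λσ;η,τ} − F_{λη;τ,σ} − F_{λτ;η,σ}) = 0 for all η,τ. -/
import Mathlib


open Matrix

noncomputable section

/-- The combinatorial factor `n(μν)`: 1 if `μ = ν`, 2 otherwise. -/
def nfac (μ ν : Fin 4) : ℝ := if μ = ν then 1 else 2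

/-- `ϱ = √|det g|`. -/
def rho (g : Matrix (Fin 4) (Fin 4) ℝ) : ℝ := Real.sqrt |g.det|

/-- The tensor `U^{αβ,μν,λσ}` built from a metric `g` and its inverse `g⁻¹`. -/
def Uten (g : Matrix (Fin 4) (Fin 4) ℝ) (α β μ ν l s : Fin 4) : ℝ :=
  rho g * nfac α β * nfac l s / 4 *
    (-2 * g⁻¹ α β * g⁻¹ l s * g⁻¹ μ ν
      + g⁻¹ α l * g⁻¹ β s * g⁻¹ μ ν
      + g⁻¹ β l * g⁻¹ α s * g⁻¹ μ ν
      + g⁻¹ α β * g⁻¹ l μ * g⁻¹ s ν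
      + g⁻¹ α β * g⁻¹ s μ * g⁻¹ l ν
      + g⁻¹ l s * g⁻¹ α ν * g⁻¹ β μ
      + g⁻¹ l s * g⁻¹ β ν * g⁻¹ α μ
      - g⁻¹ α ν * g⁻¹ l μ * g⁻¹ β s
      - g⁻¹ β ν * g⁻¹ l μ * g⁻¹ α s
      - g⁻¹ α ν * g⁻¹ s μ * g⁻¹ β l
      - g⁻¹ β ν * g⁻¹ s μ * g⁻¹ α l)

/-! ### Auxiliary definitions -/

/-- The trace quantity `T_{ητ} = G^{λσ}(F_{ητ;λσ} + F_{λσ;ητ} − F_{λη;τσ} − F_{λτ;ησ})`. -/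
def TT (G : Matrix (Fin 4) (Fin 4) ℝ) (F : Fin 4 → Fin 4 → Fin 4 → Fin 4 → ℝ)
    (η τ : Fin 4) : ℝ :=
  ∑ l : Fin 4, ∑ s : Fin 4, G l s * (F η τ l s + F l s η τ - F l η τ s - F l τ η s)

/-- `S^{αβ} = G^{αη} G^{βτ} T_{ητ}`. -/
def SS (G : Matrix (Fin 4) (Fin 4) ℝ) (F : Fin 4 → Fin 4 → Fin 4 → Fin 4 → ℝ)
    (α β : Fin 4) : ℝ :=
  ∑ η : Fin 4, ∑ τ : Fin 4, G α η * G β τ * TT G F η τ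

/-- `t = G^{ητ} T_{ητ}`. -/
def tt (G : Matrix (Fin 4) (Fin 4) ℝ) (F : Fin 4 → Fin 4 → Fin 4 → Fin 4 → ℝ) : ℝ :=
  ∑ η : Fin 4, ∑ τ : Fin 4, G η τ * TT G F η τ

/-! ### Combinatorial lemma removing the restriction `l ≤ s` -/

lemma pairSum (X : Fin 4 → Fin 4 → ℝ) (hX : ∀ l s, X l s = X s l) :
    (∑ l : Fin 4, ∑ s : Fin 4, if l ≤ s then nfac l s * X l s else 0)
      = ∑ l : Fin 4, ∑ s : Fin 4, X l s := by
  simp only [Fin.sum_univ_four, nfac]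
  simp (config := { decide := true }) only [if_true, if_false]
  rw [hX 1 0, hX 2 0, hX 2 1, hX 3 0, hX 3 1, hX 3 2]
  ring

/-! ### The five contraction pieces -/

section Pieces

variable (G : Matrix (Fin 4) (Fin 4) ℝ) (F : Fin 4 → Fin 4 → Fin 4 → Fin 4 → ℝ)

lemma piece1 (hG : ∀ i j, G i j = G j i)
    (hF1 : ∀ a b c d, F a b c d = F b a c d) (hF2 : ∀ a b c d, F a b c d = F a b d c)
    (α β : Fin 4) :
    (∑ μ : Fin 4, ∑ ν : Fin 4, ∑ l : Fin 4, ∑ s : Fin 4,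
        F l s μ ν * (G l s * G α β * G μ ν))
      = G α β * ∑ η : Fin 4, ∑ τ : Fin 4, G η τ * ∑ l : Fin 4, ∑ s : Fin 4,
          G l s * F η τ l s := by
  have k10 : ∀ a b, F a b 1 0 = F a b 0 1 := fun a b => hF2 a b 1 0
  have k20 : ∀ a b, F a b 2 0 = F a b 0 2 := fun a b => hF2 a b 2 0
  have k21 : ∀ a b, F a b 2 1 = F a b 1 2 := fun a b => hF2 a b 2 1
  have k30 : ∀ a b, F a b 3 0 = F a b 0 3 := fun a b => hF2 a b 3 0
  have k31 : ∀ a b, F a b 3 1 = F a b 1 3 := fun a b => hF2 a b 3 1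
  have k32 : ∀ a b, F a b 3 2 = F a b 2 3 := fun a b => hF2 a b 3 2
  simp only [Fin.sum_univ_four]
  simp only [hG 1 0, hG 2 0, hG 2 1, hG 3 0, hG 3 1, hG 3 2,
    hG 0 α, hG 1 α, hG 2 α, hG 3 α, hG 0 β, hG 1 β, hG 2 β, hG 3 β,
    hF1 1 0, hF1 2 0, hF1 2 1, hF1 3 0, hF1 3 1, hF1 3 2,
    k10, k20, k21, k30, k31, k32]
  ring

lemma piece2 (hG : ∀ i j, G i j = G j i)
    (hF1 : ∀ a b c d, F a b c d = F b a c d) (hF2 : ∀ a b c d, F a b c d = F a b d c)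
    (α β : Fin 4) :
    (∑ μ : Fin 4, ∑ ν : Fin 4, ∑ l : Fin 4, ∑ s : Fin 4,
        F l s μ ν * (G l α * G s β * G μ ν + G s α * G l β * G μ ν))
      = 2 * ∑ η : Fin 4, ∑ τ : Fin 4, G α η * G β τ * ∑ l : Fin 4, ∑ s : Fin 4,
          G l s * F η τ l s := by
  have k10 : ∀ a b, F a b 1 0 = F a b 0 1 := fun a b => hF2 a b 1 0
  have k20 : ∀ a b, F a b 2 0 = F a b 0 2 := fun a b => hF2 a b 2 0
  have k21 : ∀ a b, F a b 2 1 = F a b 1 2 := fun a b => hF2 a b 2 1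
  have k30 : ∀ a b, F a b 3 0 = F a b 0 3 := fun a b => hF2 a b 3 0
  have k31 : ∀ a b, F a b 3 1 = F a b 1 3 := fun a b => hF2 a b 3 1
  have k32 : ∀ a b, F a b 3 2 = F a b 2 3 := fun a b => hF2 a b 3 2
  simp only [Fin.sum_univ_four]
  simp only [hG 1 0, hG 2 0, hG 2 1, hG 3 0, hG 3 1, hG 3 2,
    hG 0 α, hG 1 α, hG 2 α, hG 3 α, hG 0 β, hG 1 β, hG 2 β, hG 3 β,
    hF1 1 0, hF1 2 0, hF1 2 1, hF1 3 0, hF1 3 1, hF1 3 2,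
    k10, k20, k21, k30, k31, k32]
  ring

lemma piece3 (hG : ∀ i j, G i j = G j i)
    (hF1 : ∀ a b c d, F a b c d = F b a c d) (hF2 : ∀ a b c d, F a b c d = F a b d c)
    (α β : Fin 4) :
    (∑ μ : Fin 4, ∑ ν : Fin 4, ∑ l : Fin 4, ∑ s : Fin 4,
        F l s μ ν * (G l s * G α μ * G β ν + G l s * G β μ * G α ν))
      = 2 * ∑ η : Fin 4, ∑ τ : Fin 4, G α η * G β τ * ∑ l : Fin 4, ∑ s : Fin 4,
          G l s * F l s η τ := by
  have k10 : ∀ a b, F a b 1 0 = F a b 0 1 := fun a b => hF2 a b 1 0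
  have k20 : ∀ a b, F a b 2 0 = F a b 0 2 := fun a b => hF2 a b 2 0
  have k21 : ∀ a b, F a b 2 1 = F a b 1 2 := fun a b => hF2 a b 2 1
  have k30 : ∀ a b, F a b 3 0 = F a b 0 3 := fun a b => hF2 a b 3 0
  have k31 : ∀ a b, F a b 3 1 = F a b 1 3 := fun a b => hF2 a b 3 1
  have k32 : ∀ a b, F a b 3 2 = F a b 2 3 := fun a b => hF2 a b 3 2
  simp only [Fin.sum_univ_four]
  simp only [hG 1 0, hG 2 0, hG 2 1, hG 3 0, hG 3 1, hG 3 2,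
    hG 0 α, hG 1 α, hG 2 α, hG 3 α, hG 0 β, hG 1 β, hG 2 β, hG 3 β,
    hF1 1 0, hF1 2 0, hF1 2 1, hF1 3 0, hF1 3 1, hF1 3 2,
    k10, k20, k21, k30, k31, k32]
  ring

lemma piece4 (hG : ∀ i j, G i j = G j i)
    (hF1 : ∀ a b c d, F a b c d = F b a c d) (hF2 : ∀ a b c d, F a b c d = F a b d c)
    (α β : Fin 4) :
    (∑ μ : Fin 4, ∑ ν : Fin 4, ∑ l : Fin 4, ∑ s : Fin 4,
        F l s μ ν * (G α β * G l ν * G s μ + G α β * G s ν * G l μ))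
      = 2 * (G α β * ∑ η : Fin 4, ∑ τ : Fin 4, G η τ * ∑ l : Fin 4, ∑ s : Fin 4,
          G l s * F l η τ s) := by
  have k10 : ∀ a b, F a b 1 0 = F a b 0 1 := fun a b => hF2 a b 1 0
  have k20 : ∀ a b, F a b 2 0 = F a b 0 2 := fun a b => hF2 a b 2 0
  have k21 : ∀ a b, F a b 2 1 = F a b 1 2 := fun a b => hF2 a b 2 1
  have k30 : ∀ a b, F a b 3 0 = F a b 0 3 := fun a b => hF2 a b 3 0
  have k31 : ∀ a b, F a b 3 1 = F a b 1 3 := fun a b => hF2 a b 3 1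
  have k32 : ∀ a b, F a b 3 2 = F a b 2 3 := fun a b => hF2 a b 3 2
  simp only [Fin.sum_univ_four]
  simp only [hG 1 0, hG 2 0, hG 2 1, hG 3 0, hG 3 1, hG 3 2,
    hG 0 α, hG 1 α, hG 2 α, hG 3 α, hG 0 β, hG 1 β, hG 2 β, hG 3 β,
    hF1 1 0, hF1 2 0, hF1 2 1, hF1 3 0, hF1 3 1, hF1 3 2,
    k10, k20, k21, k30, k31, k32]
  ring

lemma piece5 (hG : ∀ i j, G i j = G j i)
    (hF1 : ∀ a b c d, F a b c d = F b a c d) (hF2 : ∀ a b c d, F a b c d = F a b d c)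
    (α β : Fin 4) :
    (∑ μ : Fin 4, ∑ ν : Fin 4, ∑ l : Fin 4, ∑ s : Fin 4,
        F l s μ ν * (G l ν * G α μ * G s β + G s ν * G α μ * G l β
          + G l ν * G β μ * G s α + G s ν * G β μ * G l α))
      = 2 * ((∑ η : Fin 4, ∑ τ : Fin 4, G α η * G β τ * ∑ l : Fin 4, ∑ s : Fin 4,
            G l s * F l η τ s)
          + (∑ η : Fin 4, ∑ τ : Fin 4, G α η * G β τ * ∑ l : Fin 4, ∑ s : Fin 4,
            G l s * F l τ η s)) := by
  have k10 : ∀ a b, F a b 1 0 = F a b 0 1 := fun a b => hF2 a b 1 0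
  have k20 : ∀ a b, F a b 2 0 = F a b 0 2 := fun a b => hF2 a b 2 0
  have k21 : ∀ a b, F a b 2 1 = F a b 1 2 := fun a b => hF2 a b 2 1
  have k30 : ∀ a b, F a b 3 0 = F a b 0 3 := fun a b => hF2 a b 3 0
  have k31 : ∀ a b, F a b 3 1 = F a b 1 3 := fun a b => hF2 a b 3 1
  have k32 : ∀ a b, F a b 3 2 = F a b 2 3 := fun a b => hF2 a b 3 2
  simp only [Fin.sum_univ_four]
  simp only [hG 1 0, hG 2 0, hG 2 1, hG 3 0, hG 3 1, hG 3 2,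
    hG 0 α, hG 1 α, hG 2 α, hG 3 α, hG 0 β, hG 1 β, hG 2 β, hG 3 β,
    hF1 1 0, hF1 2 0, hF1 2 1, hF1 3 0, hF1 3 1, hF1 3 2,
    k10, k20, k21, k30, k31, k32]
  ring

lemma relabel1 (hG : ∀ i j, G i j = G j i)
    (hF1 : ∀ a b c d, F a b c d = F b a c d) (hF2 : ∀ a b c d, F a b c d = F a b d c) :
    (∑ η : Fin 4, ∑ τ : Fin 4, G η τ * ∑ l : Fin 4, ∑ s : Fin 4, G l s * F l s η τ)
      = ∑ η : Fin 4, ∑ τ : Fin 4, G η τ * ∑ l : Fin 4, ∑ s : Fin 4, G l s * F η τ l s := by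
  have k10 : ∀ a b, F a b 1 0 = F a b 0 1 := fun a b => hF2 a b 1 0
  have k20 : ∀ a b, F a b 2 0 = F a b 0 2 := fun a b => hF2 a b 2 0
  have k21 : ∀ a b, F a b 2 1 = F a b 1 2 := fun a b => hF2 a b 2 1
  have k30 : ∀ a b, F a b 3 0 = F a b 0 3 := fun a b => hF2 a b 3 0
  have k31 : ∀ a b, F a b 3 1 = F a b 1 3 := fun a b => hF2 a b 3 1
  have k32 : ∀ a b, F a b 3 2 = F a b 2 3 := fun a b => hF2 a b 3 2
  simp only [Fin.sum_univ_four]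
  simp only [hG 1 0, hG 2 0, hG 2 1, hG 3 0, hG 3 1, hG 3 2,
    hF1 1 0, hF1 2 0, hF1 2 1, hF1 3 0, hF1 3 1, hF1 3 2,
    k10, k20, k21, k30, k31, k32]
  ring

lemma relabel2 (hG : ∀ i j, G i j = G j i)
    (hF1 : ∀ a b c d, F a b c d = F b a c d) (hF2 : ∀ a b c d, F a b c d = F a b d c) :
    (∑ η : Fin 4, ∑ τ : Fin 4, G η τ * ∑ l : Fin 4, ∑ s : Fin 4, G l s * F l τ η s)
      = ∑ η : Fin 4, ∑ τ : Fin 4, G η τ * ∑ l : Fin 4, ∑ s : Fin 4, G l s * F l η τ s := by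
  have k10 : ∀ a b, F a b 1 0 = F a b 0 1 := fun a b => hF2 a b 1 0
  have k20 : ∀ a b, F a b 2 0 = F a b 0 2 := fun a b => hF2 a b 2 0
  have k21 : ∀ a b, F a b 2 1 = F a b 1 2 := fun a b => hF2 a b 2 1
  have k30 : ∀ a b, F a b 3 0 = F a b 0 3 := fun a b => hF2 a b 3 0
  have k31 : ∀ a b, F a b 3 1 = F a b 1 3 := fun a b => hF2 a b 3 1
  have k32 : ∀ a b, F a b 3 2 = F a b 2 3 := fun a b => hF2 a b 3 2
  simp only [Fin.sum_univ_four]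
  simp only [hG 1 0, hG 2 0, hG 2 1, hG 3 0, hG 3 1, hG 3 2,
    hF1 1 0, hF1 2 0, hF1 2 1, hF1 3 0, hF1 3 1, hF1 3 2,
    k10, k20, k21, k30, k31, k32]
  ring

/-- Splitting `S^{αβ}` into its four pieces. -/
lemma splitS (α β : Fin 4) :
    SS G F α β
      = (∑ η : Fin 4, ∑ τ : Fin 4, G α η * G β τ * ∑ l : Fin 4, ∑ s : Fin 4,
          G l s * F η τ l s)
        + (∑ η : Fin 4, ∑ τ : Fin 4, G α η * G β τ * ∑ l : Fin 4, ∑ s : Fin 4,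
          G l s * F l s η τ)
        - (∑ η : Fin 4, ∑ τ : Fin 4, G α η * G β τ * ∑ l : Fin 4, ∑ s : Fin 4,
          G l s * F l η τ s)
        - (∑ η : Fin 4, ∑ τ : Fin 4, G α η * G β τ * ∑ l : Fin 4, ∑ s : Fin 4,
          G l s * F l τ η s) := by
  simp only [SS, TT, mul_add, mul_sub, Finset.sum_add_distrib, Finset.sum_sub_distrib,
    Finset.mul_sum]

/-- Splitting `t` into its four pieces. -/
lemma splitt :
    tt G F
      = (∑ η : Fin 4, ∑ τ : Fin 4, G η τ * ∑ l : Fin 4, ∑ s : Fin 4, G l s * F η τ l s)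
        + (∑ η : Fin 4, ∑ τ : Fin 4, G η τ * ∑ l : Fin 4, ∑ s : Fin 4, G l s * F l s η τ)
        - (∑ η : Fin 4, ∑ τ : Fin 4, G η τ * ∑ l : Fin 4, ∑ s : Fin 4, G l s * F l η τ s)
        - (∑ η : Fin 4, ∑ τ : Fin 4, G η τ * ∑ l : Fin 4, ∑ s : Fin 4, G l s * F l τ η s) := by
  simp only [tt, TT, mul_add, mul_sub, Finset.sum_add_distrib, Finset.sum_sub_distrib,
    Finset.mul_sum]

end Pieces

/-- The key identity. -/
lemma keyAux (r : ℝ) (G : Matrix (Fin 4) (Fin 4) ℝ) (hG : ∀ i j, G i j = G j i)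
    (F : Fin 4 → Fin 4 → Fin 4 → Fin 4 → ℝ)
    (hF1 : ∀ a b c d, F a b c d = F b a c d) (hF2 : ∀ a b c d, F a b c d = F a b d c)
    (α β : Fin 4) :
    (∑ μ : Fin 4, ∑ ν : Fin 4, ∑ l : Fin 4, ∑ s : Fin 4, if l ≤ s then
        nfac l s * (F l s μ ν *
          (r * (-2 * G l s * G α β * G μ ν
            + G l α * G s β * G μ ν
            + G s α * G l β * G μ ν
            + G l s * G α μ * G β ν
            + G l s * G β μ * G α ν
            + G α β * G l ν * G s μ
            + G α β * G s ν * G l μ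
            - G l ν * G α μ * G s β
            - G s ν * G α μ * G l β
            - G l ν * G β μ * G s α
            - G s ν * G β μ * G l α))) else 0)
      = r * (2 * SS G F α β - tt G F * G α β) := by
  have step1 : (∑ μ : Fin 4, ∑ ν : Fin 4, ∑ l : Fin 4, ∑ s : Fin 4, if l ≤ s then
        nfac l s * (F l s μ ν *
          (r * (-2 * G l s * G α β * G μ ν
            + G l α * G s β * G μ ν
            + G s α * G l β * G μ ν
            + G l s * G α μ * G β ν
            + G l s * G β μ * G α ν
            + G α β * G l ν * G s μ
            + G α β * G s ν * G l μ
            - G l ν * G α μ * G s β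
            - G s ν * G α μ * G l β
            - G l ν * G β μ * G s α
            - G s ν * G β μ * G l α))) else 0)
      = ∑ μ : Fin 4, ∑ ν : Fin 4, ∑ l : Fin 4, ∑ s : Fin 4,
          F l s μ ν *
          (r * (-2 * G l s * G α β * G μ ν
            + G l α * G s β * G μ ν
            + G s α * G l β * G μ ν
            + G l s * G α μ * G β ν
            + G l s * G β μ * G α ν
            + G α β * G l ν * G s μ
            + G α β * G s ν * G l μ
            - G l ν * G α μ * G s β
            - G s ν * G α μ * G l β
            - G l ν * G β μ * G s α
            - G s ν * G β μ * G l α)) := by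
    refine Finset.sum_congr rfl fun μ _ => Finset.sum_congr rfl fun ν _ => ?_
    exact pairSum _ (fun l s => by rw [hF1 l s μ ν, hG l s]; ring)
  rw [step1]
  have step2 : (∑ μ : Fin 4, ∑ ν : Fin 4, ∑ l : Fin 4, ∑ s : Fin 4,
          F l s μ ν *
          (r * (-2 * G l s * G α β * G μ ν
            + G l α * G s β * G μ ν
            + G s α * G l β * G μ ν
            + G l s * G α μ * G β ν
            + G l s * G β μ * G α ν
            + G α β * G l ν * G s μ
            + G α β * G s ν * G l μ
            - G l ν * G α μ * G s β
            - G s ν * G α μ * G l β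
            - G l ν * G β μ * G s α
            - G s ν * G β μ * G l α)))
      = r * ∑ μ : Fin 4, ∑ ν : Fin 4, ∑ l : Fin 4, ∑ s : Fin 4,
          F l s μ ν *
          (-2 * G l s * G α β * G μ ν
            + G l α * G s β * G μ ν
            + G s α * G l β * G μ ν
            + G l s * G α μ * G β ν
            + G l s * G β μ * G α ν
            + G α β * G l ν * G s μ
            + G α β * G s ν * G l μ
            - G l ν * G α μ * G s β
            - G s ν * G α μ * G l β
            - G l ν * G β μ * G s α
            - G s ν * G β μ * G l α) := by
    simp only [Finset.mul_sum]
    refine Finset.sum_congr rfl fun μ _ => Finset.sum_congr rfl fun ν _ =>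
      Finset.sum_congr rfl fun l _ => Finset.sum_congr rfl fun s _ => by ring
  rw [step2]
  have hmain : (∑ μ : Fin 4, ∑ ν : Fin 4, ∑ l : Fin 4, ∑ s : Fin 4,
          F l s μ ν *
          (-2 * G l s * G α β * G μ ν
            + G l α * G s β * G μ ν
            + G s α * G l β * G μ ν
            + G l s * G α μ * G β ν
            + G l s * G β μ * G α ν
            + G α β * G l ν * G s μ
            + G α β * G s ν * G l μ
            - G l ν * G α μ * G s β
            - G s ν * G α μ * G l β
            - G l ν * G β μ * G s α
            - G s ν * G β μ * G l α))
      = 2 * SS G F α β - tt G F * G α β := by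
    have merge : (-2) * (∑ μ : Fin 4, ∑ ν : Fin 4, ∑ l : Fin 4, ∑ s : Fin 4,
            F l s μ ν * (G l s * G α β * G μ ν))
          + (∑ μ : Fin 4, ∑ ν : Fin 4, ∑ l : Fin 4, ∑ s : Fin 4,
            F l s μ ν * (G l α * G s β * G μ ν + G s α * G l β * G μ ν))
          + (∑ μ : Fin 4, ∑ ν : Fin 4, ∑ l : Fin 4, ∑ s : Fin 4,
            F l s μ ν * (G l s * G α μ * G β ν + G l s * G β μ * G α ν))
          + (∑ μ : Fin 4, ∑ ν : Fin 4, ∑ l : Fin 4, ∑ s : Fin 4,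
            F l s μ ν * (G α β * G l ν * G s μ + G α β * G s ν * G l μ))
          - (∑ μ : Fin 4, ∑ ν : Fin 4, ∑ l : Fin 4, ∑ s : Fin 4,
            F l s μ ν * (G l ν * G α μ * G s β + G s ν * G α μ * G l β
              + G l ν * G β μ * G s α + G s ν * G β μ * G l α))
        = ∑ μ : Fin 4, ∑ ν : Fin 4, ∑ l : Fin 4, ∑ s : Fin 4,
          F l s μ ν *
          (-2 * G l s * G α β * G μ ν
            + G l α * G s β * G μ ν
            + G s α * G l β * G μ ν
            + G l s * G α μ * G β ν
            + G l s * G β μ * G α ν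
            + G α β * G l ν * G s μ
            + G α β * G s ν * G l μ
            - G l ν * G α μ * G s β
            - G s ν * G α μ * G l β
            - G l ν * G β μ * G s α
            - G s ν * G β μ * G l α) := by
      simp only [Finset.mul_sum, ← Finset.sum_add_distrib, ← Finset.sum_sub_distrib]
      refine Finset.sum_congr rfl fun μ _ => Finset.sum_congr rfl fun ν _ =>
        Finset.sum_congr rfl fun l _ => Finset.sum_congr rfl fun s _ => by ring
    rw [← merge, piece1 G F hG hF1 hF2 α β, piece2 G F hG hF1 hF2 α β,
      piece3 G F hG hF1 hF2 α β, piece4 G F hG hF1 hF2 α β, piece5 G F hG hF1 hF2 α β,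
      splitS G F α β, splitt G F, relabel1 G F hG hF1 hF2, relabel2 G F hG hF1 hF2]
    ring
  rw [hmain]

/-- a family `F_{αβ;μ,ν}`, symmetric under `α↔β` and `μ↔ν`,
satisfies `Σ_{λ≤σ,μ,ν} F_{λσ;μ,ν} U^{λσ,μν,αβ} = 0` for all `α ≤ β` if and
only if it satisfies the trace condition
`g^{λσ}(F_{ητ;λ,σ} + F_{λσ;η,τ} − F_{λη;τ,σ} − F_{λτ;η,σ}) = 0` for all `η,τ`. -/
theorem homogeneous_solutions_characterization
    (g : Matrix (Fin 4) (Fin 4) ℝ)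
    (hsymm : g.IsSymm) (hdet : IsUnit g.det)
    (F : Fin 4 → Fin 4 → Fin 4 → Fin 4 → ℝ)
    (hF1 : ∀ α β μ ν, F α β μ ν = F β α μ ν)
    (hF2 : ∀ α β μ ν, F α β μ ν = F α β ν μ) :
    (∀ α β : Fin 4, α ≤ β →
      (∑ μ : Fin 4, ∑ ν : Fin 4, ∑ l : Fin 4, ∑ s : Fin 4, if l ≤ s then
        F l s μ ν * Uten g l s μ ν α β else 0) = 0)
    ↔ (∀ η τ : Fin 4,
      (∑ l : Fin 4, ∑ s : Fin 4, g⁻¹ l s *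
        (F η τ l s + F l s η τ - F l η τ s - F l τ η s)) = 0) := by
  have hgs : ∀ i j, g i j = g j i := fun i j => hsymm.apply j i
  have hinvsymm : (g⁻¹)ᵀ = g⁻¹ := by
    rw [Matrix.transpose_nonsing_inv, hsymm.eq]
  have hG : ∀ i j, g⁻¹ i j = g⁻¹ j i := fun i j => (congrFun (congrFun hinvsymm j) i)
  -- the key identity
  have key : ∀ α β : Fin 4,
      (∑ μ : Fin 4, ∑ ν : Fin 4, ∑ l : Fin 4, ∑ s : Fin 4, if l ≤ s then
        F l s μ ν * Uten g l s μ ν α β else 0)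
      = rho g * nfac α β / 4 * (2 * SS g⁻¹ F α β - tt g⁻¹ F * g⁻¹ α β) := by
    intro α β
    have h0 : (∑ μ : Fin 4, ∑ ν : Fin 4, ∑ l : Fin 4, ∑ s : Fin 4, if l ≤ s then
        F l s μ ν * Uten g l s μ ν α β else 0)
        = ∑ μ : Fin 4, ∑ ν : Fin 4, ∑ l : Fin 4, ∑ s : Fin 4, if l ≤ s then
          nfac l s * (F l s μ ν *
            (rho g * nfac α β / 4 *
              (-2 * g⁻¹ l s * g⁻¹ α β * g⁻¹ μ ν
                + g⁻¹ l α * g⁻¹ s β * g⁻¹ μ ν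
                + g⁻¹ s α * g⁻¹ l β * g⁻¹ μ ν
                + g⁻¹ l s * g⁻¹ α μ * g⁻¹ β ν
                + g⁻¹ l s * g⁻¹ β μ * g⁻¹ α ν
                + g⁻¹ α β * g⁻¹ l ν * g⁻¹ s μ
                + g⁻¹ α β * g⁻¹ s ν * g⁻¹ l μ
                - g⁻¹ l ν * g⁻¹ α μ * g⁻¹ s β
                - g⁻¹ s ν * g⁻¹ α μ * g⁻¹ l β
                - g⁻¹ l ν * g⁻¹ β μ * g⁻¹ s α
                - g⁻¹ s ν * g⁻¹ β μ * g⁻¹ l α))) else 0 := by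
      refine Finset.sum_congr rfl fun μ _ => Finset.sum_congr rfl fun ν _ =>
        Finset.sum_congr rfl fun l _ => Finset.sum_congr rfl fun s _ => ?_
      by_cases h : l ≤ s
      · simp only [if_pos h, Uten]; ring
      · simp only [if_neg h]
    rw [h0]
    exact keyAux (rho g * nfac α β / 4) g⁻¹ hG F hF1 hF2 α β
  have hrho : rho g ≠ 0 := by
    have h1 : (0:ℝ) < |g.det| := abs_pos.mpr hdet.ne_zero
    exact ne_of_gt (Real.sqrt_pos.mpr h1)
  have hnf : ∀ a b : Fin 4, nfac a b ≠ 0 := by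
    intro a b; unfold nfac; split <;> norm_num
  constructor
  · intro h η τ
    have hM : ∀ a b : Fin 4, a ≤ b → 2 * SS g⁻¹ F a b - tt g⁻¹ F * g⁻¹ a b = 0 := by
      intro a b hab
      have h1 := h a b hab
      rw [key a b] at h1
      have hc : rho g * nfac a b / 4 ≠ 0 := by
        apply div_ne_zero (mul_ne_zero hrho (hnf a b)); norm_num
      exact (mul_eq_zero.mp h1).resolve_left hc
    have hTsym : ∀ a b : Fin 4, TT g⁻¹ F a b = TT g⁻¹ F b a := by
      intro a b
      refine Finset.sum_congr rfl fun l _ => Finset.sum_congr rfl fun s _ => ?_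
      rw [hF1 a b l s, hF2 l s a b]; ring
    have hSsym : ∀ a b : Fin 4, SS g⁻¹ F a b = SS g⁻¹ F b a := by
      intro a b
      rw [SS, SS, Finset.sum_comm]
      refine Finset.sum_congr rfl fun η _ => Finset.sum_congr rfl fun τ _ => ?_
      rw [hTsym τ η]; ring
    have hMall : ∀ a b : Fin 4, 2 * SS g⁻¹ F a b - tt g⁻¹ F * g⁻¹ a b = 0 := by
      intro a b
      rcases le_total a b with hab | hab
      · exact hM a b hab
      · rw [hSsym a b, hG a b]; exact hM b a hab
    -- matrix manipulation: 2 T = t g, then t = 0, then T = 0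
    set Tm : Matrix (Fin 4) (Fin 4) ℝ := Matrix.of (fun a b => TT g⁻¹ F a b) with hTm
    have hmul : ∀ a b, (g⁻¹ * Tm * g⁻¹) a b = SS g⁻¹ F a b := by
      intro a b
      rw [Matrix.mul_apply]
      calc (∑ j, (g⁻¹ * Tm) a j * g⁻¹ j b)
          = ∑ j, ∑ i, g⁻¹ a i * Tm i j * g⁻¹ j b := by
            refine Finset.sum_congr rfl fun j _ => ?_
            rw [Matrix.mul_apply, Finset.sum_mul]
        _ = ∑ i, ∑ j, g⁻¹ a i * g⁻¹ b j * Tm i j := by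
            rw [Finset.sum_comm]
            refine Finset.sum_congr rfl fun i _ => Finset.sum_congr rfl fun j _ => ?_
            rw [hG j b]; ring
        _ = SS g⁻¹ F a b := rfl
    have hmat : (2:ℝ) • (g⁻¹ * Tm * g⁻¹) = tt g⁻¹ F • g⁻¹ := by
      ext a b
      simp only [Matrix.smul_apply, smul_eq_mul]
      rw [hmul a b]
      have := hMall a b; linarith
    have e : g * (g⁻¹ * Tm * g⁻¹) * g = Tm := by
      simp only [← Matrix.mul_assoc]
      rw [Matrix.mul_nonsing_inv g hdet, Matrix.one_mul, Matrix.mul_assoc,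
        Matrix.nonsing_inv_mul g hdet, Matrix.mul_one]
    have hTmEq : (2:ℝ) • Tm = tt g⁻¹ F • g := by
      have h1 : g * ((2:ℝ) • (g⁻¹ * Tm * g⁻¹)) * g = g * (tt g⁻¹ F • g⁻¹) * g := by
        rw [hmat]
      rw [Matrix.mul_smul, Matrix.mul_smul, Matrix.smul_mul, Matrix.smul_mul, e] at h1
      rw [h1, Matrix.mul_nonsing_inv g hdet, Matrix.one_mul]
    have hent : ∀ a b, 2 * Tm a b = tt g⁻¹ F * g a b := by
      intro a b
      have h2 := congrFun (congrFun hTmEq a) b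
      simpa using h2
    have htr : (∑ η : Fin 4, ∑ τ : Fin 4, g⁻¹ η τ * g η τ) = 4 := by
      have h1 : ∀ η : Fin 4, (∑ τ : Fin 4, g⁻¹ η τ * g η τ) = (g⁻¹ * g) η η := by
        intro η
        rw [Matrix.mul_apply]
        exact Finset.sum_congr rfl fun τ _ => by rw [hgs η τ]
      simp only [h1]
      rw [Matrix.nonsing_inv_mul g hdet]
      simp [Matrix.one_apply, Fin.sum_univ_four]
    have ht0 : tt g⁻¹ F = 0 := by
      have e1 : 2 * tt g⁻¹ F = tt g⁻¹ F * 4 := by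
        calc 2 * tt g⁻¹ F = ∑ η : Fin 4, ∑ τ : Fin 4, g⁻¹ η τ * (2 * Tm η τ) := by
              rw [tt, Finset.mul_sum]
              refine Finset.sum_congr rfl fun η _ => ?_
              rw [Finset.mul_sum]
              exact Finset.sum_congr rfl fun τ _ => by
                simp only [hTm, Matrix.of_apply]; ring
          _ = ∑ η : Fin 4, ∑ τ : Fin 4, g⁻¹ η τ * (tt g⁻¹ F * g η τ) := by
              exact Finset.sum_congr rfl fun η _ => Finset.sum_congr rfl fun τ _ => by
                rw [hent η τ]
          _ = tt g⁻¹ F * ∑ η : Fin 4, ∑ τ : Fin 4, g⁻¹ η τ * g η τ := by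
              rw [Finset.mul_sum]
              refine Finset.sum_congr rfl fun η _ => ?_
              rw [Finset.mul_sum]
              exact Finset.sum_congr rfl fun τ _ => by ring
          _ = tt g⁻¹ F * 4 := by rw [htr]
      linarith
    have hTent : Tm η τ = 0 := by
      have h2 := hent η τ
      rw [ht0, zero_mul] at h2
      linarith
    exact hTent
  · intro h a b _
    rw [key a b]
    have hT0 : ∀ η τ : Fin 4, TT g⁻¹ F η τ = 0 := h
    have hS0 : SS g⁻¹ F a b = 0 := by
      rw [SS]
      refine Finset.sum_eq_zero fun η _ => Finset.sum_eq_zero fun τ _ => ?_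
      rw [hT0 η τ, mul_zero]
    have ht0 : tt g⁻¹ F = 0 := by
      rw [tt]
      refine Finset.sum_eq_zero fun η _ => Finset.sum_eq_zero fun τ _ => ?_
      rw [hT0 η τ, mul_zero]
    rw [hS0, ht0]
    ring

end
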